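/- Let ℓ : ℝ → ℝ satisfy ℓ(0) = 0 and 0 < ε₁ ≤ (ℓ(x)−ℓ(y))/(x−y) ≤ L₁ for all x ≠ y, and assume ℓ is convex. Define ℓ_s(x) := (1/s)·ℓ(sx) for s > 0. Then ℓ_s converges pointwise as s → ∞ to ℓ_∞(x) := L̄·x for x ≥ 0 and ℓ_∞(x) := L_·x for x < 0, where L̄ := lim_{x→∞} ℓ'₊(x) and L_ := lim_{x→−∞} ℓ'₋(x), and the convergence is uniform on compact subsets of ℝ. -/

import Mathlib

open Filter Set Topology



lemma my_hasDerivWithinAt_Ici (ℓ : ℝ → ℝ) (hconv : ConvexOn ℝ Set.univ ℓ)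
    {c : ℝ} (hlb : ∀ x y : ℝ, x ≠ y → c ≤ (ℓ x - ℓ y) / (x - y)) (x : ℝ) :
    HasDerivWithinAt ℓ (sInf (slope ℓ x '' Ioi x)) (Ici x) x := by
  rw [hasDerivWithinAt_iff_tendsto_slope, Ici_sdiff_left]
  apply MonotoneOn.tendsto_nhdsGT
  · intro a ha b hb hab
    simp only [slope_def_field]
    exact hconv.secant_mono (mem_univ x) (mem_univ a) (mem_univ b) ha.ne' hb.ne' hab
  · refine ⟨c, ?_⟩
    rintro _ ⟨a, ha, rfl⟩
    rw [slope_def_field]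
    exact hlb a x (ne_of_gt ha)

lemma my_hasDerivWithinAt_Iic (ℓ : ℝ → ℝ) (hconv : ConvexOn ℝ Set.univ ℓ)
    {C : ℝ} (hub : ∀ x y : ℝ, x ≠ y → (ℓ x - ℓ y) / (x - y) ≤ C) (x : ℝ) :
    HasDerivWithinAt ℓ (sSup (slope ℓ x '' Iio x)) (Iic x) x := by
  rw [hasDerivWithinAt_iff_tendsto_slope, Iic_diff_right]
  apply MonotoneOn.tendsto_nhdsLT
  · intro a ha b hb hab
    simp only [slope_def_field]
    exact hconv.secant_mono (mem_univ x) (mem_univ a) (mem_univ b) ha.ne hb.ne hab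
  · refine ⟨C, ?_⟩
    rintro _ ⟨a, ha, rfl⟩
    rw [slope_def_field]
    exact hub a x (ne_of_lt ha)


theorem stmt_10
    (ℓ : ℝ → ℝ) (hℓ0 : ℓ 0 = 0) (hconv : ConvexOn ℝ Set.univ ℓ)
    (ε₁ L₁ : ℝ) (hε : 0 < ε₁)
    (hslope : ∀ x y : ℝ, x ≠ y → ε₁ ≤ (ℓ x - ℓ y) / (x - y) ∧ (ℓ x - ℓ y) / (x - y) ≤ L₁)
    (Lbar Lund : ℝ)
    -- L̄ is the limit of the right derivative at +∞
    (hLbar : Tendsto (fun x : ℝ => derivWithin ℓ (Set.Ici x) x) atTop (nhds Lbar))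
    -- L_ is the limit of the left derivative at −∞
    (hLund : Tendsto (fun x : ℝ => derivWithin ℓ (Set.Iic x) x) atBot (nhds Lund)) :
    (∀ x : ℝ, Tendsto (fun s : ℝ => (1 / s) * ℓ (s * x)) atTop
      (nhds (if 0 ≤ x then Lbar * x else Lund * x))) ∧
    (∀ K : Set ℝ, IsCompact K →
      TendstoUniformlyOn (fun (s : ℝ) (x : ℝ) => (1 / s) * ℓ (s * x))
        (fun x => if 0 ≤ x then Lbar * x else Lund * x) atTop K) := by
  
  have hlb : ∀ x y : ℝ, x ≠ y → ε₁ ≤ (ℓ x - ℓ y) / (x - y) := fun x y h => (hslope x y h).1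
  have hub : ∀ x y : ℝ, x ≠ y → (ℓ x - ℓ y) / (x - y) ≤ L₁ := fun x y h => (hslope x y h).2
  set D : ℝ → ℝ := fun x => derivWithin ℓ (Ici x) x with hDdef
  set E : ℝ → ℝ := fun x => derivWithin ℓ (Iic x) x with hEdef
  have hD : ∀ x, HasDerivWithinAt ℓ (D x) (Ici x) x := fun x =>
    ((my_hasDerivWithinAt_Ici ℓ hconv hlb x).differentiableWithinAt).hasDerivWithinAt
  have hE : ∀ x, HasDerivWithinAt ℓ (E x) (Iic x) x := fun x =>
    ((my_hasDerivWithinAt_Iic ℓ hconv hub x).differentiableWithinAt).hasDerivWithinAt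
  have hDslope : ∀ x, Tendsto (slope ℓ x) (𝓝[>] x) (𝓝 (D x)) := by
    intro x
    have := hasDerivWithinAt_iff_tendsto_slope.1 (hD x)
    rwa [Ici_sdiff_left] at this
  have hEslope : ∀ x, Tendsto (slope ℓ x) (𝓝[<] x) (𝓝 (E x)) := by
    intro x
    have := hasDerivWithinAt_iff_tendsto_slope.1 (hE x)
    rwa [Iic_diff_right] at this
  -- D x ≤ slope ℓ x y for x < y
  have hDle : ∀ x y : ℝ, x < y → D x ≤ slope ℓ x y := fun x y h =>
    hconv.le_slope_of_hasDerivWithinAt_Ioi (mem_univ x) (mem_univ y) h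
      ((hD x).mono Ioi_subset_Ici_self)
  -- slope ℓ x y ≤ E y for x < y
  have hleE : ∀ x y : ℝ, x < y → slope ℓ x y ≤ E y := fun x y h =>
    hconv.slope_le_of_hasDerivWithinAt_Iio (mem_univ x) (mem_univ y) h
      ((hE y).mono Iio_subset_Iic_self)
  -- E t ≤ slope ℓ t u for t < u
  have hEle : ∀ t u : ℝ, t < u → E t ≤ slope ℓ t u := by
    intro t u htu
    refine le_of_tendsto (hEslope t) ?_
    filter_upwards [self_mem_nhdsWithin] with v (hv : v < t)
    simp only [slope_def_field]
    exact hconv.secant_mono (mem_univ t) (mem_univ v) (mem_univ u) hv.ne htu.ne'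
      (hv.le.trans htu.le)
  -- slope ℓ x t ≤ D t for x < t
  have hleD : ∀ x t : ℝ, x < t → slope ℓ x t ≤ D t := by
    intro x t hxt
    rw [slope_comm]
    refine ge_of_tendsto (hDslope t) ?_
    filter_upwards [self_mem_nhdsWithin] with u (hu : t < u)
    simp only [slope_def_field]
    exact hconv.secant_mono (mem_univ t) (mem_univ x) (mem_univ u) hxt.ne hu.ne'
      (hxt.le.trans hu.le)
  have hslope_lb : ∀ x y : ℝ, x ≠ y → ε₁ ≤ slope ℓ x y := by
    intro x y h; rw [slope_def_field]; exact hlb y x (fun e => h e.symm)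
  have hslope_ub : ∀ x y : ℝ, x ≠ y → slope ℓ x y ≤ L₁ := by
    intro x y h; rw [slope_def_field]; exact hub y x (fun e => h e.symm)
  have hDub : ∀ t : ℝ, D t ≤ L₁ := fun t =>
    (hDle t (t + 1) (by linarith)).trans (hslope_ub _ _ (by linarith))
  have hDlb : ∀ t : ℝ, ε₁ ≤ D t := fun t =>
    (hslope_lb (t - 1) t (by linarith)).trans (hleD (t - 1) t (by linarith))
  have hEub : ∀ t : ℝ, E t ≤ L₁ := fun t =>
    (hEle t (t + 1) (by linarith)).trans (hslope_ub _ _ (by linarith))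
  have hElb : ∀ t : ℝ, ε₁ ≤ E t := fun t =>
    (hslope_lb (t - 1) t (by linarith)).trans (hleE (t - 1) t (by linarith))
  have hLbar_ub : Lbar ≤ L₁ := le_of_tendsto hLbar (Eventually.of_forall hDub)
  have hLbar_lb : ε₁ ≤ Lbar := ge_of_tendsto hLbar (Eventually.of_forall hDlb)
  have hLund_ub : Lund ≤ L₁ := le_of_tendsto hLund (Eventually.of_forall hEub)
  have hLund_lb : ε₁ ≤ Lund := ge_of_tendsto hLund (Eventually.of_forall hElb)
  have hεL : ε₁ ≤ L₁ := hLbar_lb.trans hLbar_ub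
  have hL₁ : 0 < L₁ := hε.trans_le hεL
  -- slope through 0 equals ℓ t / t
  have hslope0 : ∀ t : ℝ, slope ℓ 0 t = ℓ t / t := by
    intro t; rw [slope_def_field, hℓ0, sub_zero, sub_zero]
  -- the limit of ℓ t / t at +∞ is Lbar
  have key_pos : Tendsto (fun t : ℝ => ℓ t / t) atTop (𝓝 Lbar) := by
    set G : ℝ → ℝ := fun t => slope ℓ 0 (max t 1) with hGdef
    have hmono : Monotone G := by
      intro a b hab
      simp only [hGdef, slope_def_field]
      have ha : (0:ℝ) < max a 1 := lt_of_lt_of_le one_pos (le_max_right a 1)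
      have hb : (0:ℝ) < max b 1 := lt_of_lt_of_le one_pos (le_max_right b 1)
      exact hconv.secant_mono (mem_univ 0) (mem_univ _) (mem_univ _) ha.ne' hb.ne'
        (max_le_max hab le_rfl)
    have hbdd : BddAbove (range G) := by
      refine ⟨L₁, ?_⟩
      rintro _ ⟨t, rfl⟩
      exact hslope_ub 0 (max t 1) (ne_of_lt (lt_of_lt_of_le one_pos (le_max_right t 1)))
    have hGt : Tendsto G atTop (𝓝 (⨆ t, G t)) := tendsto_atTop_ciSup hmono hbdd
    set M := ⨆ t, G t with hMdef
    have hgG : (fun t : ℝ => ℓ t / t) =ᶠ[atTop] G := by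
      filter_upwards [eventually_ge_atTop 1] with t ht
      rw [hGdef]
      simp only [max_eq_left ht, hslope0]
    have hg : Tendsto (fun t : ℝ => ℓ t / t) atTop (𝓝 M) := hGt.congr' hgG.symm
    have h2t : Tendsto (fun t : ℝ => 2 * t) atTop atTop :=
      (tendsto_id (α := ℝ)).const_mul_atTop two_pos
    have hg2 : Tendsto (fun t : ℝ => ℓ (2 * t) / (2 * t)) atTop (𝓝 M) := hg.comp h2t
    have h1 : M ≤ Lbar := by
      refine le_of_tendsto_of_tendsto hg hLbar ?_
      filter_upwards [eventually_gt_atTop 0] with t ht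
      rw [← hslope0]
      exact hleD 0 t ht
    have h2 : Lbar ≤ M := by
      have hφ : Tendsto (fun t : ℝ => 2 * (ℓ (2 * t) / (2 * t)) - ℓ t / t) atTop
          (𝓝 (2 * M - M)) := ((hg2.const_mul 2).sub hg)
      have hMM : 2 * M - M = M := by ring
      rw [hMM] at hφ
      refine le_of_tendsto_of_tendsto hLbar hφ ?_
      filter_upwards [eventually_gt_atTop 0] with t ht
      have hne : t ≠ 0 := ht.ne'
      have := hDle t (2 * t) (by linarith)
      rw [slope_def_field] at this
      refine this.trans_eq ?_
      rw [show (2:ℝ) * t - t = t by ring, sub_div, ← mul_div_assoc,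
        mul_div_mul_left _ _ (two_ne_zero (α := ℝ))]
    have : M = Lbar := le_antisymm h1 h2
    rwa [this] at hg
  -- the limit of ℓ t / t at -∞ is Lund
  have key_neg : Tendsto (fun t : ℝ => ℓ t / t) atBot (𝓝 Lund) := by
    set G : ℝ → ℝ := fun t => slope ℓ 0 (min t (-1)) with hGdef
    have hmono : Monotone G := by
      intro a b hab
      simp only [hGdef, slope_def_field]
      have ha : min a (-1) < (0:ℝ) := lt_of_le_of_lt (min_le_right a (-1)) (by norm_num)
      have hb : min b (-1) < (0:ℝ) := lt_of_le_of_lt (min_le_right b (-1)) (by norm_num)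
      exact hconv.secant_mono (mem_univ 0) (mem_univ _) (mem_univ _) ha.ne hb.ne
        (min_le_min hab le_rfl)
    have hbdd : BddBelow (range G) := by
      refine ⟨ε₁, ?_⟩
      rintro _ ⟨t, rfl⟩
      exact hslope_lb 0 (min t (-1)) (ne_of_gt (lt_of_le_of_lt (min_le_right t (-1)) (by norm_num)))
    have hGt : Tendsto G atBot (𝓝 (⨅ t, G t)) := tendsto_atBot_ciInf hmono hbdd
    set N := ⨅ t, G t with hNdef
    have hgG : (fun t : ℝ => ℓ t / t) =ᶠ[atBot] G := by
      filter_upwards [eventually_le_atBot (-1 : ℝ)] with t ht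
      rw [hGdef]
      simp only [min_eq_left ht, hslope0]
    have hg : Tendsto (fun t : ℝ => ℓ t / t) atBot (𝓝 N) := hGt.congr' hgG.symm
    have h2t : Tendsto (fun t : ℝ => 2 * t) atBot atBot :=
      (tendsto_id (α := ℝ)).const_mul_atBot two_pos
    have hg2 : Tendsto (fun t : ℝ => ℓ (2 * t) / (2 * t)) atBot (𝓝 N) := hg.comp h2t
    have h1 : Lund ≤ N := by
      refine le_of_tendsto_of_tendsto hLund hg ?_
      filter_upwards [eventually_lt_atBot 0] with t ht
      rw [← hslope0, slope_comm]
      exact hEle t 0 ht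
    have h2 : N ≤ Lund := by
      have hφ : Tendsto (fun t : ℝ => 2 * (ℓ (2 * t) / (2 * t)) - ℓ t / t) atBot
          (𝓝 (2 * N - N)) := ((hg2.const_mul 2).sub hg)
      have hNN : 2 * N - N = N := by ring
      rw [hNN] at hφ
      refine le_of_tendsto_of_tendsto hφ hLund ?_
      filter_upwards [eventually_lt_atBot 0] with t ht
      have hne : t ≠ 0 := ht.ne
      have := hleE (2 * t) t (by linarith)
      rw [slope_def_field] at this
      refine le_trans (le_of_eq ?_) this
      rw [show t - 2 * t = -t by ring, div_neg, ← neg_div, neg_sub, sub_div, ← mul_div_assoc,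
        mul_div_mul_left _ _ (two_ne_zero (α := ℝ))]
    have : N = Lund := le_antisymm h2 h1
    rwa [this] at hg
  -- pointwise convergence
  have hpt : ∀ x : ℝ, Tendsto (fun s : ℝ => (1 / s) * ℓ (s * x)) atTop
      (𝓝 (if 0 ≤ x then Lbar * x else Lund * x)) := by
    intro x
    rcases lt_trichotomy x 0 with hx | rfl | hx
    · rw [if_neg (not_le.mpr hx)]
      have hsx : Tendsto (fun s : ℝ => s * x) atTop atBot :=
        (tendsto_id (α := ℝ)).atTop_mul_const_of_neg hx
      have h1 : Tendsto (fun s : ℝ => ℓ (s * x) / (s * x)) atTop (𝓝 Lund) := key_neg.comp hsx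
      have h2 : Tendsto (fun s : ℝ => (ℓ (s * x) / (s * x)) * x) atTop (𝓝 (Lund * x)) :=
        h1.mul_const x
      refine h2.congr' ?_
      filter_upwards [eventually_gt_atTop 0] with s hs
      have hsx0 : s * x ≠ 0 := mul_ne_zero hs.ne' hx.ne
      field_simp
      exact mul_div_cancel_left₀ _ hx.ne
    · rw [if_pos le_rfl]
      simp only [mul_zero, hℓ0]
      simpa using (tendsto_const_nhds : Tendsto (fun _ : ℝ => (0:ℝ)) atTop (𝓝 0))
    · rw [if_pos hx.le]
      have hsx : Tendsto (fun s : ℝ => s * x) atTop atTop :=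
        (tendsto_id (α := ℝ)).atTop_mul_const hx
      have h1 : Tendsto (fun s : ℝ => ℓ (s * x) / (s * x)) atTop (𝓝 Lbar) := key_pos.comp hsx
      have h2 : Tendsto (fun s : ℝ => (ℓ (s * x) / (s * x)) * x) atTop (𝓝 (Lbar * x)) :=
        h1.mul_const x
      refine h2.congr' ?_
      filter_upwards [eventually_gt_atTop 0] with s hs
      have hsx0 : s * x ≠ 0 := by positivity
      field_simp
  refine ⟨hpt, ?_⟩
  intro K hK
  set g : ℝ → ℝ := fun x => if 0 ≤ x then Lbar * x else Lund * x with hgdef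
  rw [Metric.tendstoUniformlyOn_iff]
  intro ε hεp
  -- uniform Lipschitz bound for the rescaled functions
  have hLip : ∀ s : ℝ, 0 < s → ∀ a b : ℝ,
      |(1 / s) * ℓ (s * a) - (1 / s) * ℓ (s * b)| ≤ L₁ * |a - b| := by
    intro s hs a b
    rcases eq_or_ne a b with rfl | hne
    · simp [hL₁.le]
    have hne' : s * a ≠ s * b := fun h => hne (mul_left_cancel₀ hs.ne' h)
    have hq := hslope (s * a) (s * b) hne'
    have habs : |(ℓ (s * a) - ℓ (s * b)) / (s * a - s * b)| ≤ L₁ := by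
      rw [abs_le]
      exact ⟨by linarith [hq.1], hq.2⟩
    have hd : s * a - s * b ≠ 0 := sub_ne_zero.mpr hne'
    have hrepr : ℓ (s * a) - ℓ (s * b)
        = ((ℓ (s * a) - ℓ (s * b)) / (s * a - s * b)) * (s * a - s * b) := by
      field_simp
    calc |(1 / s) * ℓ (s * a) - (1 / s) * ℓ (s * b)|
        = (1 / s) * |ℓ (s * a) - ℓ (s * b)| := by
          rw [← mul_sub, abs_mul, abs_of_pos (by positivity : (0:ℝ) < 1 / s)]
      _ = (1 / s) * (|(ℓ (s * a) - ℓ (s * b)) / (s * a - s * b)| * |s * a - s * b|) := by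
          rw [← abs_mul, ← hrepr]
      _ ≤ (1 / s) * (L₁ * |s * a - s * b|) :=
          mul_le_mul_of_nonneg_left
            (mul_le_mul_of_nonneg_right habs (abs_nonneg _)) (by positivity)
      _ = L₁ * |a - b| := by
          rw [← mul_sub, abs_mul, abs_of_pos hs]
          field_simp
  -- the limit function is Lipschitz
  have hgLip : ∀ a b : ℝ, |g a - g b| ≤ L₁ * |a - b| := by
    have hkey : ∀ a b : ℝ, a ≤ b → 0 ≤ g b - g a ∧ g b - g a ≤ L₁ * (b - a) := by
      intro a b hab
      by_cases ha : 0 ≤ a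
      · have hb : 0 ≤ b := le_trans ha hab
        simp only [hgdef, if_pos ha, if_pos hb]
        constructor <;> nlinarith
      · by_cases hb : 0 ≤ b
        · simp only [hgdef, if_neg ha, if_pos hb]
          push_neg at ha
          constructor <;> nlinarith
        · simp only [hgdef, if_neg ha, if_neg hb]
          push_neg at ha hb
          constructor <;> nlinarith
    intro a b
    rcases le_total a b with h | h
    · have hk := hkey a b h
      rw [abs_sub_comm, abs_of_nonneg hk.1, abs_sub_comm, abs_of_nonneg (sub_nonneg.2 h)]
      exact hk.2
    · have hk := hkey b a h
      rw [abs_of_nonneg hk.1, abs_of_nonneg (sub_nonneg.2 h)]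
      exact hk.2
  have hδpos : 0 < ε / (3 * (L₁ + 1)) := by positivity
  set δ := ε / (3 * (L₁ + 1)) with hδdef
  obtain ⟨T, hTK, hTcov⟩ := hK.elim_nhds_subcover (fun t => Metric.ball t δ)
    (fun t _ => Metric.ball_mem_nhds t hδpos)
  have hev : ∀ᶠ s in atTop, ∀ t ∈ T, dist ((1 / s) * ℓ (s * t)) (g t) < ε / 3 :=
    (T.eventually_all).2 fun t _ =>
      (Metric.tendsto_nhds.mp (hpt t)) (ε / 3) (by positivity)
  filter_upwards [hev, eventually_gt_atTop 0] with s hs hs0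
  intro x hx
  obtain ⟨t, htT, hxt⟩ := Set.mem_iUnion₂.1 (hTcov hx)
  have hxt' : |x - t| < δ := by
    have hb := Metric.mem_ball.1 hxt
    rwa [Real.dist_eq] at hb
  have hLδ : L₁ * |x - t| < ε / 3 := by
    have h1 : L₁ * |x - t| ≤ L₁ * δ := mul_le_mul_of_nonneg_left hxt'.le hL₁.le
    have h2 : L₁ * δ < (L₁ + 1) * δ := by nlinarith
    have h3 : (L₁ + 1) * δ = ε / 3 := by
      rw [hδdef]
      field_simp
    linarith
  have e1 : dist (g x) (g t) < ε / 3 := by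
    rw [Real.dist_eq]
    exact (hgLip x t).trans_lt hLδ
  have e2 : dist (g t) ((1 / s) * ℓ (s * t)) < ε / 3 := by
    rw [dist_comm]
    exact hs t htT
  have e3 : dist ((1 / s) * ℓ (s * t)) ((1 / s) * ℓ (s * x)) < ε / 3 := by
    rw [Real.dist_eq]
    refine (hLip s hs0 t x).trans_lt ?_
    rwa [abs_sub_comm] at hLδ
  calc dist (g x) ((1 / s) * ℓ (s * x))
      ≤ dist (g x) (g t) + dist (g t) ((1 / s) * ℓ (s * t))
        + dist ((1 / s) * ℓ (s * t)) ((1 / s) * ℓ (s * x)) := dist_triangle4 _ _ _ _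
    _ < ε / 3 + ε / 3 + ε / 3 := by linarith
    _ = ε := by ring
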